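/- Suppose the period τ is odd. Then the total infrastructural distance over one period of the principal cycle satisfies Σ_{i=1}^{2τ} (1/2)·ln((√N + P_i)/(√N − P_i)) = ln(p_{2τ−1} + q_{2τ−1}√N), and Σ_{i=1}^{τ} (1/2)·ln((√N + P_i)/(√N − P_i)) = (1/2)·ln(p_{2τ−1} + q_{2τ−1}√N). -/
import Mathlib

set_option maxHeartbeats 1000000

private theorem intInduct {M : ℤ → Prop} (h0 : M 1)
    (h1 : ∀ n : ℤ, 1 ≤ n → M n → M (n + 1)) : ∀ m : ℤ, 1 ≤ m → M m :=
  fun m hm => Int.le_induction h0 h1 m hm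

theorem stmt_18
    (N : ℕ) (hN : 0 < N) (hNsq : ¬ IsSquare N)
    (a P Q : ℤ → ℤ)
    (hP0 : P 0 = 0) (hQ0 : Q 0 = 1)
    (ha : ∀ m : ℤ, 0 ≤ m → a m = ⌊((P m : ℝ) + Real.sqrt N) / (Q m : ℝ)⌋)
    (hPrec : ∀ m : ℤ, 0 ≤ m → P (m + 1) = a m * Q m - P m)
    (hQrec : ∀ m : ℤ, 0 ≤ m → Q (m + 1) * Q m = (N : ℤ) - P (m + 1) ^ 2)
    (τ : ℕ) (hτ : 0 < τ)
    (hper : ∀ n : ℤ, 1 ≤ n → a (n + τ) = a n)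
    (hmin : ∀ τ' : ℕ, 0 < τ' → (∀ n : ℤ, 1 ≤ n → a (n + τ') = a n) → τ ≤ τ')
    (p q : ℤ → ℤ)
    (hp1 : p (-1) = 1) (hp0 : p 0 = a 0)
    (hq1 : q (-1) = 0) (hq0 : q 0 = 1)
    (hprec : ∀ m : ℤ, 1 ≤ m → p m = a m * p (m - 1) + p (m - 2))
    (hqrec : ∀ m : ℤ, 1 ≤ m → q m = a m * q (m - 1) + q (m - 2))
    (hτodd : Odd τ)
    :
    (∑ i ∈ Finset.range (2 * τ),
        (1 / 2 : ℝ) * Real.log ((Real.sqrt N + (P ((i : ℤ) + 1) : ℝ))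
          / (Real.sqrt N - (P ((i : ℤ) + 1) : ℝ))))
        = Real.log ((p (2 * (τ : ℤ) - 1) : ℝ) + (q (2 * (τ : ℤ) - 1) : ℝ) * Real.sqrt N)
      ∧ (∑ i ∈ Finset.range τ,
        (1 / 2 : ℝ) * Real.log ((Real.sqrt N + (P ((i : ℤ) + 1) : ℝ))
          / (Real.sqrt N - (P ((i : ℤ) + 1) : ℝ))))
        = (1 / 2 : ℝ) * Real.log ((p (2 * (τ : ℤ) - 1) : ℝ) + (q (2 * (τ : ℤ) - 1) : ℝ) * Real.sqrt N) := by
  set s : ℝ := Real.sqrt N with hs_def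
  have hsnn : 0 ≤ s := Real.sqrt_nonneg _
  have hs2 : s ^ 2 = (N : ℝ) := Real.sq_sqrt (by positivity)
  -- N ≥ 2
  have hN2 : 2 ≤ N := by
    rcases Nat.lt_or_ge N 2 with h | h
    · interval_cases N
      · exact absurd ⟨1, rfl⟩ hNsq
    · exact h
  have hs1 : 1 < s := by
    by_contra h
    push_neg at h
    have h2r : (2:ℝ) ≤ (N:ℝ) := by exact_mod_cast hN2
    nlinarith [hs2, hsnn, h2r, mul_le_mul h h hsnn zero_le_one]
  have hNsq' : ∀ z : ℤ, (N : ℤ) ≠ z ^ 2 := by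
    intro z h
    apply hNsq
    refine ⟨z.natAbs, ?_⟩
    have h2 : (N : ℤ) = ((z.natAbs * z.natAbs : ℕ) : ℤ) := by
      rw [Int.natAbs_mul_self, h]; ring
    exact_mod_cast h2
  have hsne : ∀ z : ℤ, s ≠ (z : ℝ) := by
    intro z h
    apply hNsq' z
    have : (N : ℝ) = ((z : ℝ)) ^ 2 := by rw [← hs2, h]
    exact_mod_cast this
  -- a 0
  have ha0 : a 0 = ⌊s⌋ := by
    have := ha 0 le_rfl
    rw [hP0, hQ0] at this
    simpa using this
  have ha0ub : s < (a 0 : ℝ) + 1 := by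
    rw [ha0]; exact_mod_cast Int.lt_floor_add_one s
  have hfl : (a 0 : ℝ) ≤ s := by rw [ha0]; exact Int.floor_le s
  have ha0lb : (a 0 : ℝ) < s := lt_of_le_of_ne hfl (fun h => hsne (a 0) h.symm)
  have ha0pos : 1 ≤ a 0 := by
    rw [ha0]
    exact Int.le_floor.mpr (by exact_mod_cast hs1.le)
  have hP1 : P 1 = a 0 := by
    have := hPrec 0 le_rfl
    rw [hP0, hQ0] at this; simpa using this
  have hQ1 : Q 1 = (N : ℤ) - a 0 ^ 2 := by
    have h := hQrec 0 le_rfl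
    norm_num [hQ0] at h
    rw [hP1] at h
    exact h
  -- floor inequalities for a m
  have hfloor : ∀ m : ℤ, 0 ≤ m → (0:ℝ) < (Q m : ℝ) →
      0 < (P m : ℝ) + s - (a m : ℝ) * (Q m : ℝ) ∧
      (P m : ℝ) + s - (a m : ℝ) * (Q m : ℝ) < (Q m : ℝ) := by
    intro m hm hq
    have hQner : ((Q m : ℝ)) ≠ 0 := ne_of_gt hq
    have ham := ha m hm
    constructor
    · have h1 : (a m : ℝ) ≤ ((P m : ℝ) + s) / (Q m : ℝ) := by
        rw [ham]; exact Int.floor_le _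
      have hne : (a m : ℝ) ≠ ((P m : ℝ) + s) / (Q m : ℝ) := by
        intro h
        apply hsne (a m * Q m - P m)
        field_simp at h
        push_cast
        linarith [h]
      have h2 : (a m : ℝ) < ((P m : ℝ) + s) / (Q m : ℝ) := lt_of_le_of_ne h1 hne
      nlinarith [(lt_div_iff₀ hq).mp h2]
    · have h3 : ((P m : ℝ) + s) / (Q m : ℝ) < (a m : ℝ) + 1 := by
        rw [ham]; exact Int.lt_floor_add_one _
      nlinarith [(div_lt_iff₀ hq).mp h3]
  -- reducedness
  have hRed : ∀ m : ℤ, 1 ≤ m → 0 < Q m ∧ 0 < P m ∧ (P m : ℝ) < s ∧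
      (Q m : ℝ) < (P m : ℝ) + s ∧ s - (P m : ℝ) < (Q m : ℝ) := by
    apply intInduct
    ·
      have hQ1pos : 0 < Q 1 := by
        have hr : (0:ℝ) < (N : ℝ) - (a 0 : ℝ) ^ 2 := by nlinarith
        have : (0:ℤ) < (N : ℤ) - a 0 ^ 2 := by exact_mod_cast hr
        rw [hQ1]; exact this
      have hQ1r : (1:ℝ) ≤ (Q 1 : ℝ) := by exact_mod_cast hQ1pos
      have hQ1v : ((Q 1 : ℤ) : ℝ) = (N : ℝ) - (a 0 : ℝ) ^ 2 := by
        rw [hQ1]; push_cast; ring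
      refine ⟨hQ1pos, by rw [hP1]; linarith, ?_, ?_, ?_⟩
      · rw [hP1]; exact ha0lb
      · rw [hP1, hQ1v]; nlinarith
      · rw [hP1]; linarith
    · intro n hn ih
      obtain ⟨hQpos, hPpos, hPlt, hα, hᾱ⟩ := ih
      have hQr : (0:ℝ) < (Q n : ℝ) := by exact_mod_cast hQpos
      obtain ⟨hf1, hf2⟩ := hfloor n (by linarith) hQr
      have han : 1 ≤ a n := by
        have := ha n (by linarith)
        rw [this]
        apply Int.le_floor.mpr
        rw [le_div_iff₀ hQr]
        push_cast
        linarith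
      have hanr : (1:ℝ) ≤ (a n : ℝ) := by exact_mod_cast han
      have eP : ((P (n+1) : ℤ) : ℝ) = (a n : ℝ) * (Q n : ℝ) - (P n : ℝ) := by
        rw [hPrec n (by linarith)]; push_cast; ring
      have f1 : (0:ℝ) < s - (P (n+1) : ℝ) := by rw [eP]; linarith
      have f2 : s - (P (n+1) : ℝ) < (Q n : ℝ) := by rw [eP]; linarith
      have f3 : (0:ℝ) < s + (P (n+1) : ℝ) := by rw [eP]; nlinarith
      have eQ : ((Q (n+1) : ℤ) : ℝ) * (Q n : ℝ) = (s - (P (n+1) : ℝ)) * (s + (P (n+1) : ℝ)) := by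
        have h := hQrec n (by linarith)
        have h' : ((Q (n+1) : ℝ)) * ((Q n : ℝ)) = (N : ℝ) - ((P (n+1) : ℝ)) ^ 2 := by
          exact_mod_cast congrArg (fun z : ℤ => (z : ℝ)) h
        linear_combination h' - hs2
      have hQ1pos : (0:ℝ) < (Q (n+1) : ℝ) := by
        by_contra h
        push_neg at h
        nlinarith [mul_pos f1 f3]
      have hQ1posZ : 0 < Q (n+1) := by exact_mod_cast hQ1pos
      -- α_{n+1} > 1 : Q (n+1) < P (n+1) + s
      have f4 : (Q (n+1) : ℝ) < (P (n+1) : ℝ) + s := by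
        have key : (0:ℝ) < (s + (P (n+1) : ℝ)) * ((Q n : ℝ) - (s - (P (n+1) : ℝ))) :=
          mul_pos f3 (by linarith)
        nlinarith [eQ]
      -- ᾱ_{n+1} > -1 : s - P (n+1) < Q (n+1)
      have f5 : s - (P (n+1) : ℝ) < (Q (n+1) : ℝ) := by
        have h6 : (Q n : ℝ) < s + (P (n+1) : ℝ) := by rw [eP]; nlinarith
        have key : (0:ℝ) < (s - (P (n+1) : ℝ)) * ((s + (P (n+1) : ℝ)) - (Q n : ℝ)) :=
          mul_pos f1 (by linarith)
        nlinarith [eQ]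
      have hPp : 0 < P (n+1) := by
        have : (0:ℝ) < (P (n+1) : ℝ) := by linarith
        exact_mod_cast this
      exact ⟨hQ1posZ, hPp, by linarith, f4, f5⟩
  have hQposZ : ∀ m : ℤ, 0 ≤ m → 0 < Q m := by
    intro m hm
    rcases eq_or_lt_of_le hm with h | h
    · rw [← h, hQ0]; norm_num
    · exact (hRed m h).1
  have hfwd : ∀ T : ℤ, 1 ≤ T → P (1 + T) = P 1 → Q (1 + T) = Q 1 →
      ∀ m : ℤ, 1 ≤ m → P (m + T) = P m ∧ Q (m + T) = Q m := by
    intro T hT hPb hQb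
    apply intInduct
    · exact ⟨hPb, hQb⟩
    · intro n hn ih
      have haeq : a (n + T) = a n := by
        rw [ha (n + T) (by linarith), ha n (by linarith), ih.1, ih.2]
      have hPn : P (n + 1 + T) = P (n + 1) := by
        have e1 := hPrec n (by linarith)
        have e2 := hPrec (n + T) (by linarith)
        rw [show n + 1 + T = n + T + 1 by ring, e2, haeq, ih.1, ih.2, ← e1]
      refine ⟨hPn, ?_⟩
      have e3 := hQrec n (by linarith)
      have e4 := hQrec (n + T) (by linarith)
      rw [show n + 1 + T = n + T + 1 by ring] at hPn ⊢
      rw [hPn, ih.2] at e4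
      exact mul_right_cancel₀ (ne_of_gt (hQposZ n (by linarith))) (e4.trans e3.symm)
  have hback : ∀ m m' : ℤ, 1 ≤ m → 1 ≤ m' → P (m + 1) = P (m' + 1) → Q (m + 1) = Q (m' + 1) →
      P m = P m' ∧ Q m = Q m' := by
    intro m m' hm hm' hPe hQe
    have hQm := hQrec m (by linarith)
    have hQm' := hQrec m' (by linarith)
    have hQeq : Q m = Q m' := by
      rw [hPe, hQe] at hQm
      exact mul_left_cancel₀ (ne_of_gt (hQposZ (m' + 1) (by linarith))) (hQm.trans hQm'.symm)
    have hPm := hPrec m (by linarith)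
    have hPm' := hPrec m' (by linarith)
    have hkey : (a m - a m') * Q m = P m - P m' := by
      have h5 : a m * Q m - P m = a m' * Q m' - P m' := by rw [← hPm, ← hPm', hPe]
      linear_combination h5 - a m' * hQeq
    have r := hRed m hm
    have r' := hRed m' hm'
    have hQr : (0:ℝ) < (Q m : ℝ) := by exact_mod_cast r.1
    have hcast : ((a m : ℝ) - (a m' : ℝ)) * (Q m : ℝ) = (P m : ℝ) - (P m' : ℝ) := by
      exact_mod_cast congrArg (fun z : ℤ => (z : ℝ)) hkey
    have hQm'r : ((Q m' : ℝ)) = (Q m : ℝ) := by exact_mod_cast congrArg (fun z : ℤ => (z : ℝ)) hQeq.symm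
    have haeq : a m = a m' := by
      by_contra hne
      rcases lt_or_gt_of_ne hne with h | h
      · have hle : (a m : ℝ) - (a m' : ℝ) ≤ -1 := by
          have : a m + 1 ≤ a m' := h
          have : (a m : ℝ) + 1 ≤ (a m' : ℝ) := by exact_mod_cast this
          linarith
        have := mul_le_mul_of_nonneg_right hle hQr.le
        have b1 := r.2.2.1
        have b2 := r.2.2.2.2
        have b1' := r'.2.2.1
        have b2' := r'.2.2.2.2
        rw [hQm'r] at b2'
        linarith
      · have hle : (1:ℝ) ≤ (a m : ℝ) - (a m' : ℝ) := by
          have : a m' + 1 ≤ a m := h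
          have : (a m' : ℝ) + 1 ≤ (a m : ℝ) := by exact_mod_cast this
          linarith
        have := mul_le_mul_of_nonneg_right hle hQr.le
        have b1 := r.2.2.1
        have b2 := r.2.2.2.2
        have b1' := r'.2.2.1
        have b2' := r'.2.2.2.2
        rw [hQm'r] at b2'
        linarith
    refine ⟨?_, hQeq⟩
    rw [haeq] at hkey
    simp at hkey
    omega
  have hexT : ∃ T : ℤ, 1 ≤ T ∧ P (1 + T) = P 1 ∧ Q (1 + T) = Q 1 := by
    classical
    have key : ∀ i j : ℕ, 1 ≤ i → i < j → P (i:ℤ) = P (j:ℤ) → Q (i:ℤ) = Q (j:ℤ) →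
        ∃ T : ℤ, 1 ≤ T ∧ P (1 + T) = P 1 ∧ Q (1 + T) = Q 1 := by
      intro i j hi1 hij hPe hQe
      refine ⟨(j:ℤ) - (i:ℤ), by omega, ?_, ?_⟩ <;>
      · have down : ∀ d : ℕ, ∀ m : ℤ, 1 ≤ m → m + d = (i:ℤ) →
            P m = P (m + ((j:ℤ) - (i:ℤ))) ∧ Q m = Q (m + ((j:ℤ) - (i:ℤ))) := by
          intro d
          induction d with
          | zero =>
            intro m hm he
            have hmi : m = (i:ℤ) := by simpa using he
            subst hmi
            rw [show (i:ℤ) + ((j:ℤ) - (i:ℤ)) = (j:ℤ) by ring]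
            exact ⟨hPe, hQe⟩
          | succ d ihd =>
            intro m hm he
            have h1 : (1:ℤ) ≤ m + 1 := by linarith
            have h2 := ihd (m + 1) h1 (by push_cast at he ⊢; linarith)
            have hTpos : (0:ℤ) < (j:ℤ) - (i:ℤ) := by
              have : (i:ℤ) < (j:ℤ) := by exact_mod_cast hij
              linarith
            have hb := hback m (m + ((j:ℤ) - (i:ℤ))) hm (by linarith)
              (by rw [show m + ((j:ℤ) - (i:ℤ)) + 1 = m + 1 + ((j:ℤ) - (i:ℤ)) by ring]; exact h2.1)
              (by rw [show m + ((j:ℤ) - (i:ℤ)) + 1 = m + 1 + ((j:ℤ) - (i:ℤ)) by ring]; exact h2.2)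
            exact hb
        have hd := down (i - 1) 1 le_rfl (by push_cast [Nat.cast_sub hi1]; ring)
        first
          | exact hd.1.symm
          | exact hd.2.symm
    set M : ℕ := ((Finset.Icc (1:ℤ) (a 0)) ×ˢ (Finset.Icc (1:ℤ) (2 * a 0))).card with hM
    have hmaps : ∀ n ∈ Finset.Icc 1 (M + 1),
        (fun n : ℕ => (P (n:ℤ), Q (n:ℤ))) n ∈ (Finset.Icc (1:ℤ) (a 0)) ×ˢ (Finset.Icc (1:ℤ) (2 * a 0)) := by
      intro n hn
      simp only [Finset.mem_Icc] at hn
      have hn1 : (1:ℤ) ≤ (n:ℤ) := by exact_mod_cast hn.1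
      obtain ⟨q1, p1, p2, p3, p4⟩ := hRed n hn1
      simp only [Finset.mem_product, Finset.mem_Icc]
      have hPub : P (n:ℤ) ≤ a 0 := by
        have h1 : (P (n:ℤ) : ℝ) < (a 0 : ℝ) + 1 := lt_trans p2 ha0ub
        have h2 : P (n:ℤ) < a 0 + 1 := by exact_mod_cast h1
        omega
      have hQub : Q (n:ℤ) ≤ 2 * a 0 := by
        have h1 : (Q (n:ℤ) : ℝ) < 2 * (a 0 : ℝ) + 1 := by
          have : (P (n:ℤ) : ℝ) ≤ (a 0 : ℝ) := by exact_mod_cast hPub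
          linarith [p3, ha0ub]
        have h2 : Q (n:ℤ) < 2 * a 0 + 1 := by exact_mod_cast h1
        omega
      exact ⟨⟨p1, hPub⟩, ⟨q1, hQub⟩⟩
    have hcard : M < (Finset.Icc 1 (M + 1)).card := by
      rw [Nat.card_Icc]; omega
    obtain ⟨i, hi, j, hj, hij, heq⟩ := Finset.exists_ne_map_eq_of_card_lt_of_maps_to hcard hmaps
    simp only [Finset.mem_Icc] at hi hj
    have h1 : P (i:ℤ) = P (j:ℤ) := congrArg Prod.fst heq
    have h2 : Q (i:ℤ) = Q (j:ℤ) := congrArg Prod.snd heq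
    rcases lt_or_gt_of_ne hij with h | h
    · exact key i j hi.1 h h1 h2
    · exact key j i hj.1 h h1.symm h2.symm
  obtain ⟨T, hT1, hTP, hTQ⟩ := hexT
  have hperT := hfwd T hT1 hTP hTQ
  have haT : ∀ n : ℤ, 1 ≤ n → a (n + T) = a n := by
    intro n hn
    rw [ha (n + T) (by linarith), ha n (by linarith), (hperT n hn).1, (hperT n hn).2]
  have hQ1ne : Q 1 ≠ 0 := ne_of_gt (hQposZ 1 (by norm_num))
  have hQT : Q T = 1 := by
    have e := hQrec T (by linarith)
    rw [show T + 1 = 1 + T by ring] at e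
    rw [hTP, hP1, hTQ, ← hQ1] at e
    exact mul_left_cancel₀ hQ1ne (e.trans (mul_one (Q 1)).symm)
  have hPT : P T = a 0 := by
    have r := hRed T (by linarith)
    have hQTr : ((Q T : ℝ)) = 1 := by rw [hQT]; norm_num
    have h1 : s - 1 < (P T : ℝ) := by
      have := r.2.2.2.2
      rw [hQTr] at this
      linarith
    have h2 : (P T : ℝ) < s := r.2.2.1
    have c1 : (a 0 : ℝ) - 1 < (P T : ℝ) := by linarith
    have c2 : (P T : ℝ) < (a 0 : ℝ) + 1 := by linarith
    have c1' : a 0 - 1 < P T := by exact_mod_cast c1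
    have c2' : P T < a 0 + 1 := by exact_mod_cast c2
    omega
  have haTv : a T = 2 * a 0 := by
    have e := hPrec T (by linarith)
    rw [show T + 1 = 1 + T by ring] at e
    rw [hTP, hP1, hQT, hPT] at e
    omega
  have hmulper : ∀ σ : ℕ, (∀ n : ℤ, 1 ≤ n → a (n + σ) = a n) →
      ∀ k : ℕ, ∀ n : ℤ, 1 ≤ n → a (n + (σ:ℤ) * k) = a n := by
    intro σ hσ k
    induction k with
    | zero => intro n hn; simpa using rfl
    | succ k ihk =>
      intro n hn
      have hσk : (0:ℤ) ≤ (σ:ℤ) * k := by positivity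
      calc a (n + (σ:ℤ) * (k + 1 : ℕ))
          = a ((n + (σ:ℤ) * k) + σ) := by congr 1; push_cast; ring
        _ = a (n + (σ:ℤ) * k) := hσ _ (by linarith)
        _ = a n := ihk n hn
  set tn : ℕ := T.toNat with htn
  have htnT : (tn : ℤ) = T := Int.toNat_of_nonneg (by linarith)
  have htn1 : 1 ≤ tn := by omega
  have haTn : ∀ n : ℤ, 1 ≤ n → a (n + (tn:ℤ)) = a n := by
    intro n hn; rw [htnT]; exact haT n hn
  have hdvd : τ ∣ tn := by
    by_contra hnd
    have hr0 : tn % τ ≠ 0 := fun h => hnd (Nat.dvd_of_mod_eq_zero h)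
    have hnatZ : (τ:ℤ) * ((tn / τ : ℕ):ℤ) + ((tn % τ : ℕ):ℤ) = (tn:ℤ) := by
      exact_mod_cast congrArg (fun x : ℕ => (x:ℤ)) (Nat.div_add_mod tn τ)
    have hPer : ∀ n : ℤ, 1 ≤ n → a (n + ((tn % τ : ℕ):ℤ)) = a n := by
      intro n hn
      have hmodnn : (0:ℤ) ≤ ((tn % τ : ℕ):ℤ) := Int.ofNat_nonneg _
      calc a (n + ((tn % τ : ℕ):ℤ))
          = a ((n + ((tn % τ : ℕ):ℤ)) + (τ:ℤ) * ((tn / τ : ℕ):ℤ)) :=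
            (hmulper τ hper (tn / τ) _ (by linarith)).symm
        _ = a (n + (tn:ℤ)) := by congr 1; linarith [hnatZ]
        _ = a n := haTn n hn
    have := hmin (tn % τ) (Nat.pos_of_ne_zero hr0) hPer
    have := Nat.mod_lt tn hτ
    omega
  obtain ⟨k, hk⟩ := hdvd
  have hk1 : 1 ≤ k := by
    rcases Nat.eq_zero_or_pos k with h | h
    · subst h; simp at hk; omega
    · exact h
  have haτv : a (τ:ℤ) = 2 * a 0 := by
    have h1 : a ((τ:ℤ) + (τ:ℤ) * ((k - 1 : ℕ):ℤ)) = a (τ:ℤ) :=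
      hmulper τ hper (k - 1) (τ:ℤ) (by exact_mod_cast hτ)
    have h2 : (τ:ℤ) + (τ:ℤ) * ((k - 1 : ℕ):ℤ) = (tn:ℤ) := by
      have hc : ((k - 1 : ℕ):ℤ) = (k:ℤ) - 1 := by omega
      have hkc : (tn:ℤ) = (τ:ℤ) * (k:ℤ) := by exact_mod_cast congrArg (fun x : ℕ => (x:ℤ)) hk
      rw [hc, hkc]; ring
    rw [h2, htnT] at h1
    rw [← h1, haTv]
  have hτZ : (1:ℤ) ≤ (τ:ℤ) := by exact_mod_cast hτ
  have rτ := hRed (τ:ℤ) hτZ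
  have hQτr : (0:ℝ) < (Q (τ:ℤ) : ℝ) := by exact_mod_cast rτ.1
  have ha0posr : (1:ℝ) ≤ (a 0 : ℝ) := by exact_mod_cast ha0pos
  have hQτ : Q (τ:ℤ) = 1 := by
    have hfτ : (a (τ:ℤ) : ℝ) ≤ ((P (τ:ℤ) : ℝ) + s) / (Q (τ:ℤ) : ℝ) := by
      rw [ha (τ:ℤ) (by linarith)]; exact Int.floor_le _
    have h2a : (a (τ:ℤ) : ℝ) * (Q (τ:ℤ):ℝ) ≤ (P (τ:ℤ):ℝ) + s := (le_div_iff₀ hQτr).mp hfτ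
    have haτr : (a (τ:ℤ) : ℝ) = 2 * (a 0 : ℝ) := by exact_mod_cast congrArg (fun z : ℤ => (z:ℝ)) haτv
    rw [haτr] at h2a
    have hQτlt : Q (τ:ℤ) < 2 := by
      by_contra h
      push_neg at h
      have h2r : (2:ℝ) ≤ (Q (τ:ℤ):ℝ) := by exact_mod_cast h
      nlinarith [rτ.2.2.1, ha0ub, ha0posr,
        mul_le_mul_of_nonneg_left h2r (by linarith : (0:ℝ) ≤ 2 * (a 0:ℝ))]
    have := rτ.1
    omega
  have hPτ : P (τ:ℤ) = a 0 := by
    have hQτr1 : ((Q (τ:ℤ) : ℝ)) = 1 := by rw [hQτ]; norm_num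
    have h1 : s - 1 < (P (τ:ℤ) : ℝ) := by
      have := rτ.2.2.2.2
      rw [hQτr1] at this
      linarith
    have h2 : (P (τ:ℤ) : ℝ) < s := rτ.2.2.1
    have c1' : a 0 - 1 < P (τ:ℤ) := by exact_mod_cast (by linarith : (a 0 : ℝ) - 1 < (P (τ:ℤ):ℝ))
    have c2' : P (τ:ℤ) < a 0 + 1 := by exact_mod_cast (by linarith : (P (τ:ℤ):ℝ) < (a 0 : ℝ) + 1)
    omega
  have hPτ1 : P ((τ:ℤ) + 1) = a 0 := by
    have e := hPrec (τ:ℤ) (by linarith)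
    rw [haτv, hQτ, hPτ] at e
    omega
  have hbP : P (1 + (τ:ℤ)) = P 1 := by
    rw [show (1:ℤ) + (τ:ℤ) = (τ:ℤ) + 1 by ring, hPτ1, hP1]
  have hbQ : Q (1 + (τ:ℤ)) = Q 1 := by
    have e := hQrec (τ:ℤ) (by linarith)
    rw [hQτ, mul_one, hPτ1] at e
    rw [show (1:ℤ) + (τ:ℤ) = (τ:ℤ) + 1 by ring, e, hQ1]
  have hperτ := hfwd (τ:ℤ) hτZ hbP hbQ
  set x : ℕ → ℝ := fun k => (p ((k:ℤ) - 1) : ℝ) + (q ((k:ℤ) - 1) : ℝ) * s with hx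
  have hx0 : x 0 = 1 := by simp only [hx]; norm_num [hp1, hq1]
  have hx1 : x 1 = (a 0 : ℝ) + s := by
    simp only [hx]
    norm_num [hp0, hq0]
  have hxrec : ∀ k : ℕ, x (k + 2) = (a ((k:ℤ) + 1) : ℝ) * x (k + 1) + x k := by
    intro k
    have hknn : (0:ℤ) ≤ (k:ℤ) := Int.ofNat_nonneg k
    have e1 := hprec ((k:ℤ) + 1) (by linarith)
    have e2 := hqrec ((k:ℤ) + 1) (by linarith)
    rw [show (k:ℤ) + 1 - 1 = (k:ℤ) by ring, show (k:ℤ) + 1 - 2 = (k:ℤ) - 1 by ring] at e1 e2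
    simp only [hx]
    rw [show ((k+2:ℕ):ℤ) - 1 = (k:ℤ) + 1 by push_cast; ring,
        show ((k+1:ℕ):ℤ) - 1 = (k:ℤ) by push_cast; ring]
    rw [e1, e2]
    push_cast
    ring
  have hA : ∀ k : ℕ, x (k + 1) * (s - (P ((k:ℤ) + 1) : ℝ)) = x k * ((Q ((k:ℤ) + 1)) : ℝ) := by
    intro k
    induction k with
    | zero =>
      rw [show ((0:ℕ):ℤ) + 1 = 1 by norm_num, hx1, hx0, hP1, hQ1]
      push_cast
      linear_combination hs2
    | succ k ihk =>
      have hknn : (0:ℤ) ≤ (k:ℤ) := Int.ofNat_nonneg k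
      have hQk1pos : (0:ℝ) < ((Q ((k:ℤ) + 1)) : ℝ) := by
        exact_mod_cast hQposZ ((k:ℤ) + 1) (by linarith)
      have r1 := hxrec k
      have r3 : ((P ((k:ℤ) + 2)) : ℝ) = ((a ((k:ℤ) + 1)) : ℝ) * ((Q ((k:ℤ) + 1)) : ℝ) - ((P ((k:ℤ) + 1)) : ℝ) := by
        have h := hPrec ((k:ℤ) + 1) (by linarith)
        rw [show (k:ℤ) + 1 + 1 = (k:ℤ) + 2 by ring] at h
        exact_mod_cast congrArg (fun z : ℤ => (z : ℝ)) h
      have r4 : ((Q ((k:ℤ) + 2)) : ℝ) * ((Q ((k:ℤ) + 1)) : ℝ) = (N : ℝ) - ((P ((k:ℤ) + 2)) : ℝ) ^ 2 := by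
        have h := hQrec ((k:ℤ) + 1) (by linarith)
        rw [show (k:ℤ) + 1 + 1 = (k:ℤ) + 2 by ring] at h
        exact_mod_cast congrArg (fun z : ℤ => (z : ℝ)) h
      rw [show ((k+1:ℕ):ℤ) + 1 = (k:ℤ) + 2 by push_cast; ring]
      rw [show k + 1 + 1 = k + 2 from rfl]
      apply mul_right_cancel₀ (ne_of_gt hQk1pos)
      linear_combination ((s - ((P ((k:ℤ) + 2)) : ℝ)) * ((Q ((k:ℤ) + 1)) : ℝ)) * r1
        - (s - ((P ((k:ℤ) + 2)) : ℝ)) * ihk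
        - (x (k + 1) * (s - ((P ((k:ℤ) + 2)) : ℝ))) * r3
        - x (k + 1) * r4 + x (k + 1) * hs2
  have hxpos : ∀ k : ℕ, 0 < x k := by
    intro k
    induction k with
    | zero => rw [hx0]; norm_num
    | succ k ihk =>
      have hk1 : (1:ℤ) ≤ (k:ℤ) + 1 := by linarith [Int.ofNat_nonneg k]
      have r := hRed ((k:ℤ) + 1) hk1
      have hsP : (0:ℝ) < s - ((P ((k:ℤ) + 1)) : ℝ) := by linarith [r.2.2.1]
      have hQp : (0:ℝ) < ((Q ((k:ℤ) + 1)) : ℝ) := by exact_mod_cast r.1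
      nlinarith [hA k, mul_pos ihk hQp]
  have hS : ∀ k : ℕ, (∑ i ∈ Finset.range k,
      (1 / 2 : ℝ) * Real.log ((s + (P ((i : ℤ) + 1) : ℝ)) / (s - (P ((i : ℤ) + 1) : ℝ))))
      = Real.log (x k) - (1 / 2 : ℝ) * Real.log ((Q (k:ℤ)) : ℝ) := by
    intro k
    induction k with
    | zero => simp [hx0, hQ0]
    | succ k ihk =>
      rw [Finset.sum_range_succ, ihk]
      have hk1 : (1:ℤ) ≤ (k:ℤ) + 1 := by linarith [Int.ofNat_nonneg k]
      have r := hRed ((k:ℤ) + 1) hk1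
      have f1 : (0:ℝ) < s - ((P ((k:ℤ) + 1)) : ℝ) := by linarith [r.2.2.1]
      have f2 : (0:ℝ) < s + ((P ((k:ℤ) + 1)) : ℝ) := by
        have h0 : (0:ℝ) < ((P ((k:ℤ) + 1)) : ℝ) := by exact_mod_cast r.2.1
        linarith
      have hQkpos : (0:ℝ) < ((Q ((k:ℤ))) : ℝ) := by
        exact_mod_cast hQposZ (k:ℤ) (Int.ofNat_nonneg k)
      have hQk1pos : (0:ℝ) < ((Q ((k:ℤ) + 1)) : ℝ) := by exact_mod_cast r.1
      have hxk := hxpos k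
      have hxk1 := hxpos (k + 1)
      have eQ : (s + ((P ((k:ℤ) + 1)) : ℝ)) * (s - ((P ((k:ℤ) + 1)) : ℝ)) =
          ((Q ((k:ℤ) + 1)) : ℝ) * ((Q ((k:ℤ))) : ℝ) := by
        have h := hQrec (k:ℤ) (Int.ofNat_nonneg k)
        have h' : ((Q ((k:ℤ) + 1)) : ℝ) * ((Q ((k:ℤ))) : ℝ) = (N : ℝ) - ((P ((k:ℤ) + 1)) : ℝ) ^ 2 := by
          exact_mod_cast congrArg (fun z : ℤ => (z : ℝ)) h
        linear_combination hs2 - h'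
      have lg1 : Real.log (x (k + 1)) + Real.log (s - ((P ((k:ℤ) + 1)) : ℝ)) =
          Real.log (x k) + Real.log (((Q ((k:ℤ) + 1)) : ℝ)) := by
        rw [← Real.log_mul (ne_of_gt hxk1) (ne_of_gt f1),
          ← Real.log_mul (ne_of_gt hxk) (ne_of_gt hQk1pos), hA k]
      have lg2 : Real.log (s + ((P ((k:ℤ) + 1)) : ℝ)) + Real.log (s - ((P ((k:ℤ) + 1)) : ℝ)) =
          Real.log (((Q ((k:ℤ) + 1)) : ℝ)) + Real.log (((Q ((k:ℤ))) : ℝ)) := by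
        rw [← Real.log_mul (ne_of_gt f2) (ne_of_gt f1),
          ← Real.log_mul (ne_of_gt hQk1pos) (ne_of_gt hQkpos), eQ]
      have hdiv : Real.log ((s + ((P ((k:ℤ) + 1)) : ℝ)) / (s - ((P ((k:ℤ) + 1)) : ℝ))) =
          Real.log (s + ((P ((k:ℤ) + 1)) : ℝ)) - Real.log (s - ((P ((k:ℤ) + 1)) : ℝ)) :=
        Real.log_div (ne_of_gt f2) (ne_of_gt f1)
      rw [show ((k+1:ℕ):ℤ) = (k:ℤ) + 1 by push_cast; ring, hdiv]
      linarith [lg1, lg2]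
  have hxper : ∀ k : ℕ, x (τ + k) = x τ * x k := by
    intro k
    induction k with
    | zero => rw [Nat.add_zero, hx0, mul_one]
    | succ k ihk =>
      have hk1 : (1:ℤ) ≤ (k:ℤ) + 1 := by linarith [Int.ofNat_nonneg k]
      have hper' := hperτ ((k:ℤ) + 1) hk1
      have hAτ := hA (τ + k)
      rw [show ((τ + k : ℕ):ℤ) + 1 = ((k:ℤ) + 1) + (τ:ℤ) by push_cast; ring,
        hper'.1, hper'.2] at hAτ
      have hAk := hA k
      have f1 : (0:ℝ) < s - ((P ((k:ℤ) + 1)) : ℝ) := by linarith [(hRed ((k:ℤ) + 1) hk1).2.2.1]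
      apply mul_right_cancel₀ (ne_of_gt f1)
      calc x (τ + (k + 1)) * (s - ((P ((k:ℤ) + 1)) : ℝ))
          = x (τ + k) * ((Q ((k:ℤ) + 1)) : ℝ) := hAτ
        _ = x τ * x k * ((Q ((k:ℤ) + 1)) : ℝ) := by rw [ihk]
        _ = x τ * (x (k + 1) * (s - ((P ((k:ℤ) + 1)) : ℝ))) := by rw [mul_assoc, ← hAk]
        _ = x τ * x (k + 1) * (s - ((P ((k:ℤ) + 1)) : ℝ)) := by ring
  have hQ2τ : Q ((2 * τ : ℕ):ℤ) = 1 := by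
    have h := (hperτ (τ:ℤ) hτZ).2
    rw [show ((2 * τ : ℕ):ℤ) = (τ:ℤ) + (τ:ℤ) by push_cast; ring, h, hQτ]
  have hX1 : x (2 * τ) = ((p (2 * (τ:ℤ) - 1)) : ℝ) + ((q (2 * (τ:ℤ) - 1)) : ℝ) * s := by
    simp only [hx]
    rw [show ((2 * τ : ℕ):ℤ) - 1 = 2 * (τ:ℤ) - 1 by push_cast; ring]
  have hx2τ : x (2 * τ) = x τ * x τ := by
    rw [two_mul]
    exact hxper τ
  constructor
  · have h := hS (2 * τ)
    rw [hQ2τ] at h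
    simp only [Int.cast_one, Real.log_one, mul_zero, sub_zero] at h
    rw [h, hX1]
  · have h := hS τ
    rw [hQτ] at h
    simp only [Int.cast_one, Real.log_one, mul_zero, sub_zero] at h
    rw [h, ← hX1, hx2τ, Real.log_mul (ne_of_gt (hxpos τ)) (ne_of_gt (hxpos τ))]
    ring
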